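/- Let Φ denote the standard normal CDF. For all x ∈ ℝ and all δ ∈ [0,1]: |Φ(δ·x/√(2−δ²)) − 1/2 − δ·x/(2√π)| ≤ (6/√(2π)) · δ³ · (|x| + |x|³). -/

import Mathlib

open MeasureTheory Filter Set

/-- The standard normal density. -/
noncomputable def stdPdf (t : ℝ) : ℝ := Real.exp (-(t ^ 2) / 2) / Real.sqrt (2 * Real.pi)

/-- The standard normal cumulative distribution function. -/
noncomputable def stdCdf (x : ℝ) : ℝ := ∫ t in Set.Iic x, stdPdf t

lemma sqrt2pi_pos : (0:ℝ) < Real.sqrt (2 * Real.pi) := Real.sqrt_pos.2 (by positivity)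

lemma integrable_stdPdf : Integrable stdPdf := by
  have h : Integrable (fun t : ℝ => Real.exp (-(1/2) * t ^ 2)) :=
    integrable_exp_neg_mul_sq (by norm_num)
  have heq : stdPdf = fun t => Real.exp (-(1/2) * t ^ 2) * (Real.sqrt (2 * Real.pi))⁻¹ := by
    funext t
    rw [stdPdf, div_eq_mul_inv, show -(t ^ 2) / 2 = -(1/2) * t ^ 2 by ring]
  rw [heq]
  exact h.mul_const _

lemma stdPdf_even (t : ℝ) : stdPdf (-t) = stdPdf t := by simp [stdPdf]

lemma stdPdf_zero : stdPdf 0 = 1 / Real.sqrt (2 * Real.pi) := by simp [stdPdf]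

lemma integral_stdPdf : ∫ t, stdPdf t = 1 := by
  have h : ∫ t : ℝ, Real.exp (-(1/2) * t ^ 2) = Real.sqrt (2 * Real.pi) := by
    rw [integral_gaussian, show Real.pi / (1/2) = 2 * Real.pi by ring]
  have heq : stdPdf = fun t => Real.exp (-(1/2) * t ^ 2) / Real.sqrt (2 * Real.pi) := by
    funext t; rw [stdPdf, show -(t ^ 2) / 2 = -(1/2) * t ^ 2 by ring]
  rw [heq, integral_div, h, div_self (ne_of_gt sqrt2pi_pos)]

lemma stdCdf_zero : stdCdf 0 = 1/2 := by
  have hIic : IntegrableOn stdPdf (Iic 0) := integrable_stdPdf.integrableOn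
  have hIoi : IntegrableOn stdPdf (Ioi 0) := integrable_stdPdf.integrableOn
  have heq : (∫ t in Iic (0:ℝ), stdPdf t) = ∫ t in Ioi (0:ℝ), stdPdf t := by
    rw [← neg_zero, ← integral_comp_neg_Iic]
    simp [stdPdf_even]
  have hsum : (∫ t in Iic (0:ℝ), stdPdf t) + (∫ t in Ioi (0:ℝ), stdPdf t) = 1 := by
    rw [← integral_stdPdf, ← setIntegral_union (Iic_disjoint_Ioi le_rfl)
      measurableSet_Ioi hIic hIoi, Iic_union_Ioi, Measure.restrict_univ]
  have h2 : (2:ℝ) * stdCdf 0 = 1 := by rw [stdCdf]; linarith [heq, hsum]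
  linarith

lemma stdCdf_eq (u : ℝ) : stdCdf u = 1/2 + ∫ t in (0:ℝ)..u, stdPdf t := by
  rw [← intervalIntegral.integral_Iic_sub_Iic integrable_stdPdf.integrableOn
    integrable_stdPdf.integrableOn]
  have h0 : (∫ t in Iic (0:ℝ), stdPdf t) = 1/2 := stdCdf_zero
  rw [stdCdf, h0]; ring

lemma stdPdf_diff_bound (t : ℝ) : |stdPdf t - stdPdf 0| ≤ t ^ 2 / 2 * stdPdf 0 := by
  have h1 : Real.exp (-(t ^ 2) / 2) ≤ 1 :=
    Real.exp_le_one_iff.2 (by nlinarith [sq_nonneg t])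
  have h2 : 1 - t ^ 2 / 2 ≤ Real.exp (-(t ^ 2) / 2) := by
    have := Real.add_one_le_exp (-(t ^ 2) / 2)
    linarith
  rw [stdPdf, stdPdf_zero, ← sub_div, abs_div, abs_of_nonneg sqrt2pi_pos.le,
    div_le_iff₀ sqrt2pi_pos]
  have habs : |Real.exp (-(t ^ 2) / 2) - 1| ≤ t ^ 2 / 2 :=
    abs_le.2 ⟨by linarith, by linarith⟩
  calc |Real.exp (-(t ^ 2) / 2) - 1| ≤ t ^ 2 / 2 := habs
    _ = t ^ 2 / 2 * (1 / Real.sqrt (2 * Real.pi)) * Real.sqrt (2 * Real.pi) := by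
        field_simp

theorem taylor_bound (u : ℝ) :
    |(∫ t in (0:ℝ)..u, stdPdf t) - u * stdPdf 0| ≤ |u| ^ 3 / 2 * stdPdf 0 := by
  have hii : ∀ a b : ℝ, IntervalIntegrable stdPdf volume a b :=
    fun a b => integrable_stdPdf.intervalIntegrable
  have heq : (∫ t in (0:ℝ)..u, stdPdf t) - u * stdPdf 0
      = ∫ t in (0:ℝ)..u, (stdPdf t - stdPdf 0) := by
    rw [intervalIntegral.integral_sub (hii 0 u) intervalIntegrable_const,
      intervalIntegral.integral_const]
    simp
  rw [heq, ← Real.norm_eq_abs]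
  have hb : ∀ t ∈ Set.uIoc (0:ℝ) u, ‖stdPdf t - stdPdf 0‖ ≤ u ^ 2 / 2 * stdPdf 0 := by
    intro t ht
    have ht2 : t ^ 2 ≤ u ^ 2 := by
      rcases Set.mem_uIoc.1 ht with h | h
      · nlinarith [h.1, h.2]
      · nlinarith [h.1, h.2]
    calc ‖stdPdf t - stdPdf 0‖ ≤ t ^ 2 / 2 * stdPdf 0 := stdPdf_diff_bound t
      _ ≤ u ^ 2 / 2 * stdPdf 0 := by
          have : 0 ≤ stdPdf 0 := by rw [stdPdf_zero]; positivity
          nlinarith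
  have := intervalIntegral.norm_integral_le_of_norm_le_const hb
  calc ‖∫ t in (0:ℝ)..u, (stdPdf t - stdPdf 0)‖ ≤ u ^ 2 / 2 * stdPdf 0 * |u - 0| := this
    _ = |u| ^ 3 / 2 * stdPdf 0 := by
        rw [sub_zero, ← sq_abs u]; ring

set_option maxHeartbeats 1000000 in
/-- Pointwise Taylor expansion with explicit remainder (proof of Lemma 1):
`|Φ(δx/√(2-δ²)) - 1/2 - δx/(2√π)| ≤ (6/√(2π)) δ³ (|x| + |x|³)` for `δ ∈ [0,1]`. -/
theorem stmt8 (x : ℝ) (δ : ℝ) (hδ : δ ∈ Set.Icc (0:ℝ) 1) :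
    |stdCdf (δ * x / Real.sqrt (2 - δ ^ 2)) - 1/2 - δ * x / (2 * Real.sqrt Real.pi)| ≤
      (6 / Real.sqrt (2 * Real.pi)) * δ ^ 3 * (|x| + |x| ^ 3) := by
  obtain ⟨hδ0, hδ1⟩ := hδ
  set s := Real.sqrt (2 - δ ^ 2) with hs
  have hs2 : s ^ 2 = 2 - δ ^ 2 := Real.sq_sqrt (by nlinarith)
  have hs1 : 1 ≤ s := by
    rw [hs]
    rw [show (1:ℝ) = Real.sqrt 1 by simp]
    exact Real.sqrt_le_sqrt (by nlinarith)
  have hspos : 0 < s := lt_of_lt_of_le one_pos hs1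
  set u := δ * x / s with hu
  -- |u| ≤ δ |x|
  have hu_abs : |u| ≤ δ * |x| := by
    rw [hu, abs_div, abs_of_pos hspos, abs_mul, abs_of_nonneg hδ0, div_le_iff₀ hspos]
    nlinarith [mul_nonneg hδ0 (abs_nonneg x), hs1]
  -- |u - δx/√2| ≤ δ^3 |x|
  have hsqrt2 : Real.sqrt 2 * Real.sqrt 2 = 2 := Real.mul_self_sqrt (by norm_num)
  have hsqrt2_pos : (0:ℝ) < Real.sqrt 2 := Real.sqrt_pos.2 (by norm_num)
  have hs_le : s ≤ Real.sqrt 2 := by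
    rw [hs]; exact Real.sqrt_le_sqrt (by nlinarith)
  have hsqrt2_ge : (1:ℝ) ≤ Real.sqrt 2 := by nlinarith [hsqrt2, hsqrt2_pos]
  have hid : (Real.sqrt 2 - s) * (Real.sqrt 2 + s) = δ ^ 2 := by nlinarith [hsqrt2, hs2]
  have hkey : 1 / s - 1 / Real.sqrt 2 ≤ δ ^ 2 := by
    rw [div_sub_div _ _ (ne_of_gt hspos) (ne_of_gt hsqrt2_pos)]
    rw [div_le_iff₀ (by positivity)]
    have hge0 : 0 ≤ Real.sqrt 2 - s := by linarith
    have hA : (Real.sqrt 2 - s) * 2 ≤ δ ^ 2 := by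
      nlinarith [hid, mul_nonneg hge0 (by linarith : (0:ℝ) ≤ Real.sqrt 2 + s - 2)]
    have hsge : (1:ℝ) ≤ s * Real.sqrt 2 := by nlinarith
    have hB : δ ^ 2 ≤ δ ^ 2 * (s * Real.sqrt 2) := by
      nlinarith [mul_nonneg (sq_nonneg δ) (by linarith : (0:ℝ) ≤ s * Real.sqrt 2 - 1)]
    nlinarith [hA, hB]
  have hkey0 : 0 ≤ 1 / s - 1 / Real.sqrt 2 := by
    have : 1 / Real.sqrt 2 ≤ 1 / s := by
      apply one_div_le_one_div_of_le hspos hs_le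
    linarith
  have hdiff : |u - δ * x / Real.sqrt 2| ≤ δ ^ 3 * |x| := by
    have : u - δ * x / Real.sqrt 2 = δ * x * (1 / s - 1 / Real.sqrt 2) := by
      rw [hu]; field_simp
    rw [this, abs_mul, abs_mul, abs_of_nonneg hδ0, abs_of_nonneg hkey0]
    calc δ * |x| * (1 / s - 1 / Real.sqrt 2) ≤ δ * |x| * δ ^ 2 := by
          nlinarith [mul_nonneg hδ0 (abs_nonneg x), hkey, hkey0]
      _ = δ ^ 3 * |x| := by ring
  -- rewrite 1/(2√π) as stdPdf 0 / √2
  have hpi : 2 * Real.sqrt Real.pi = Real.sqrt 2 * Real.sqrt (2 * Real.pi) := by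
    rw [Real.sqrt_mul (by norm_num), ← mul_assoc, hsqrt2]
  have hconst : δ * x / (2 * Real.sqrt Real.pi) = (δ * x / Real.sqrt 2) * stdPdf 0 := by
    rw [stdPdf_zero, hpi]; field_simp
  rw [stdCdf_eq u, hconst]
  have h1 : |(∫ t in (0:ℝ)..u, stdPdf t) - u * stdPdf 0| ≤ |u| ^ 3 / 2 * stdPdf 0 :=
    taylor_bound u
  have h2 : |u * stdPdf 0 - (δ * x / Real.sqrt 2) * stdPdf 0| ≤ δ ^ 3 * |x| * stdPdf 0 := by
    rw [← sub_mul, abs_mul, abs_of_nonneg (by rw [stdPdf_zero]; positivity : (0:ℝ) ≤ stdPdf 0)]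
    exact mul_le_mul_of_nonneg_right hdiff (by rw [stdPdf_zero]; positivity)
  have hph : stdPdf 0 = 1 / Real.sqrt (2 * Real.pi) := stdPdf_zero
  have hstep : |1/2 + (∫ t in (0:ℝ)..u, stdPdf t) - 1/2 - (δ * x / Real.sqrt 2) * stdPdf 0|
      ≤ |u| ^ 3 / 2 * stdPdf 0 + δ ^ 3 * |x| * stdPdf 0 := by
    have : (1:ℝ)/2 + (∫ t in (0:ℝ)..u, stdPdf t) - 1/2 - (δ * x / Real.sqrt 2) * stdPdf 0
        = ((∫ t in (0:ℝ)..u, stdPdf t) - u * stdPdf 0)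
          + (u * stdPdf 0 - (δ * x / Real.sqrt 2) * stdPdf 0) := by ring
    rw [this]
    exact (abs_add_le _ _).trans (add_le_add h1 h2)
  refine hstep.trans ?_
  have hppos : (0:ℝ) < 1 / Real.sqrt (2 * Real.pi) := by positivity
  have hu3 : |u| ^ 3 ≤ δ ^ 3 * |x| ^ 3 := by
    have h0 : 0 ≤ |u| := abs_nonneg u
    calc |u| ^ 3 ≤ (δ * |x|) ^ 3 := by
          apply pow_le_pow_left₀ h0 hu_abs
      _ = δ ^ 3 * |x| ^ 3 := by ring
  rw [hph]
  have hgoal : (6 / Real.sqrt (2 * Real.pi)) * δ ^ 3 * (|x| + |x| ^ 3)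
      = 6 * (δ ^ 3 * (|x| + |x| ^ 3)) * (1 / Real.sqrt (2 * Real.pi)) := by ring
  rw [hgoal]
  have hx0 : 0 ≤ |x| := abs_nonneg x
  have hx3 : 0 ≤ |x| ^ 3 := by positivity
  have hd3 : 0 ≤ δ ^ 3 := by positivity
  nlinarith [mul_le_mul_of_nonneg_right hu3 hppos.le,
    mul_nonneg (mul_nonneg hd3 hx3) hppos.le,
    mul_nonneg (mul_nonneg hd3 hx0) hppos.le]
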